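/- arXiv:2111.02553 — 4 statements merged into one kernel-verified Lean document; each statement's English description precedes it below -/
import Mathlib

section
/- Every solution of the recurrence n α_{n+2} = 2(n+1) α_{n+1} - (n+2) α_n with integer initial values α_1, α_2 consists entirely of integers. -/
/-- Every rational solution of `n α (n+2) = 2(n+1) α (n+1) - (n+2) α n` with
integer initial values `α 1, α 2` consists entirely of integers. -/
theorem stmt5 (α : ℕ → ℚ)
    (hrec : ∀ n : ℕ, 1 ≤ n →
      (n : ℚ) * α (n + 2) = 2 * ((n : ℚ) + 1) * α (n + 1) - ((n : ℚ) + 2) * α n)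
    (h1 : ∃ z : ℤ, α 1 = z) (h2 : ∃ z : ℤ, α 2 = z) :
    ∀ n : ℕ, 1 ≤ n → ∃ z : ℤ, α n = z := by
  obtain ⟨z1, hz1⟩ := h1
  obtain ⟨z2, hz2⟩ := h2
  set d : ℚ := α 2 - α 1 with hd
  have key : ∀ n : ℕ, 1 ≤ n → α (n + 1) - α n = d * ((n : ℚ) * ((n : ℚ) + 1) / 2) := by
    intro n hn
    induction n with
    | zero => omega
    | succ m ih =>
      rcases Nat.lt_or_ge m 1 with h | hm
      · have hm0 : m = 0 := by omega
        subst hm0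
        norm_num [hd]
      · have hrm := hrec m hm
        have ihm := ih hm
        have hm0 : (m : ℚ) ≠ 0 := by
          exact_mod_cast Nat.cast_ne_zero.mpr (by omega)
        have h2 : (m : ℚ) * (α (m + 1 + 1) - α (m + 1)) =
            (m : ℚ) * (d * (((m : ℚ) + 1) * (((m : ℚ) + 1) + 1) / 2)) := by
          linear_combination hrm + ((m : ℚ) + 2) * ihm
        have := mul_left_cancel₀ hm0 h2
        push_cast
        linarith [this]
  -- now the main induction
  have main : ∀ n : ℕ, 1 ≤ n → ∃ z : ℤ, α n = z := by
    intro n hn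
    induction n with
    | zero => omega
    | succ m ih =>
      rcases Nat.lt_or_ge m 1 with h | hm
      · have : m = 0 := by omega
        subst this
        exact ⟨z1, hz1⟩
      · obtain ⟨z, hz⟩ := ih hm
        obtain ⟨k, hk⟩ : ∃ k : ℤ, (m : ℤ) * ((m : ℤ) + 1) = 2 * k := by
          have : Even ((m : ℤ) * ((m : ℤ) + 1)) := Int.even_mul_succ_self m
          obtain ⟨k, hk⟩ := this
          exact ⟨k, by linarith⟩
        refine ⟨z + (z2 - z1) * k, ?_⟩
        have hk' : ((k : ℚ)) = (m : ℚ) * ((m : ℚ) + 1) / 2 := by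
          have := congrArg (fun x : ℤ => (x : ℚ)) hk
          push_cast at this
          linarith
        have hkey := key m hm
        have : α (m + 1) = α m + d * ((m : ℚ) * ((m : ℚ) + 1) / 2) := by linarith
        rw [this, hz, hd, hz1, hz2, ← hk']
        push_cast
        ring
  exact main
end

section
/- The Fibonacci self-convolution φ_n = Σ_{k=1}^{n-1} F_k F_{n-k} (OEIS A001629, with φ_1 = 0, φ_2 = 1) satisfies the shadow recurrence F_n φ_{n+2} = 2 F_{n+1} φ_{n+1} - F_{n+2} φ_n for all n ≥ 1. -/
open Finset

lemma fibconv_rec (φ : ℕ → ℤ)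
    (hφ : ∀ n, φ n = ∑ k ∈ Finset.Ico 1 n, (Nat.fib k : ℤ) * Nat.fib (n - k)) (n : ℕ) :
    φ (n+3) = φ (n+2) + φ (n+1) + Nat.fib (n+2) := by
  rw [hφ (n+3), hφ (n+2), hφ (n+1)]
  rw [show n+3 = (n+2)+1 from rfl, Finset.sum_Ico_succ_top (by omega)]
  have key : ∀ k ∈ Finset.Ico 1 (n+2),
      (Nat.fib k : ℤ) * Nat.fib ((n+2)+1 - k)
        = (Nat.fib k : ℤ) * Nat.fib (n+2 - k) + (Nat.fib k : ℤ) * Nat.fib (n+1 - k) := by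
    intro k hk
    simp only [Finset.mem_Ico] at hk
    have e1 : (n+2)+1 - k = (n+1-k)+2 := by omega
    have e2 : n+2-k = (n+1-k)+1 := by omega
    rw [e1, e2, Nat.fib_add_two]
    push_cast
    ring
  rw [Finset.sum_congr rfl key, Finset.sum_add_distrib]
  have h2 : ∑ k ∈ Finset.Ico 1 (n+2), (Nat.fib k : ℤ) * Nat.fib (n+1 - k)
      = ∑ k ∈ Finset.Ico 1 (n+1), (Nat.fib k : ℤ) * Nat.fib (n+1 - k) := by
    rw [Finset.sum_Ico_succ_top (by omega)]
    simp
  rw [h2]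
  simp [Nat.fib_one]

lemma fibconv_closed (φ : ℕ → ℤ)
    (hφ : ∀ n, φ n = ∑ k ∈ Finset.Ico 1 n, (Nat.fib k : ℤ) * Nat.fib (n - k)) :
    ∀ m : ℕ, 5 * φ (m+1) = m * Nat.fib (m+2) + (m+2) * Nat.fib m := by
  intro m
  induction m using Nat.twoStepInduction with
  | zero => simp [hφ 1]
  | one =>
    rw [hφ 2, show Finset.Ico 1 2 = {1} from rfl]
    norm_num [Nat.fib]
  | more m ih1 ih2 =>
    have hrec := fibconv_rec φ hφ m
    have e1 : (Nat.fib (m+2) : ℤ) = Nat.fib (m+1) + Nat.fib m := by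
      rw [Nat.fib_add_two]; push_cast; ring
    have e2 : (Nat.fib (m+3) : ℤ) = Nat.fib (m+2) + Nat.fib (m+1) := by
      rw [show m+3 = (m+1)+2 from rfl, Nat.fib_add_two]; push_cast; ring
    have e3 : (Nat.fib (m+4) : ℤ) = Nat.fib (m+3) + Nat.fib (m+2) := by
      rw [show m+4 = (m+2)+2 from rfl, Nat.fib_add_two]; push_cast; ring
    simp only [show m+1+1 = m+2 from rfl, show m+1+2 = m+3 from rfl,
      show m+2+1 = m+3 from rfl, show m+2+2 = m+4 from rfl] at ih2 ⊢
    push_cast at ih1 ih2 ⊢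
    linear_combination ih1 + ih2 + 5 * hrec - (m+2:ℤ) * e3 - e2 - (m+2:ℤ) * e1

/-- The Fibonacci self-convolution `φ n = Σ_{k=1}^{n-1} F k * F (n-k)` satisfies the
shadow recurrence `F n * φ (n+2) = 2 F (n+1) φ (n+1) - F (n+2) φ n` for all `n ≥ 1`. -/
theorem stmt7 (φ : ℕ → ℤ)
    (hφ : ∀ n, φ n = ∑ k ∈ Finset.Ico 1 n, (Nat.fib k : ℤ) * Nat.fib (n - k)) :
    ∀ n : ℕ, 1 ≤ n →
      (Nat.fib n : ℤ) * φ (n + 2)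
        = 2 * (Nat.fib (n + 1) : ℤ) * φ (n + 1) - (Nat.fib (n + 2) : ℤ) * φ n := by
  intro n hn
  obtain ⟨m, rfl⟩ := Nat.exists_eq_add_of_le hn
  have h1 := fibconv_closed φ hφ m
  have h2 := fibconv_closed φ hφ (m+1)
  have h3 := fibconv_closed φ hφ (m+2)
  have e1 : (Nat.fib (m+2) : ℤ) = Nat.fib (m+1) + Nat.fib m := by
    rw [Nat.fib_add_two]; push_cast; ring
  have e2 : (Nat.fib (m+3) : ℤ) = Nat.fib (m+2) + Nat.fib (m+1) := by
    rw [show m+3 = (m+1)+2 from rfl, Nat.fib_add_two]; push_cast; ring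
  have e3 : (Nat.fib (m+4) : ℤ) = Nat.fib (m+3) + Nat.fib (m+2) := by
    rw [show m+4 = (m+2)+2 from rfl, Nat.fib_add_two]; push_cast; ring
  push_cast at h1 h2 h3 ⊢
  simp only [show 1 + m = m + 1 from by omega, show m+1+2 = m+3 from rfl,
    show m+1+1 = m+2 from rfl]
  have H : 5 * ((Nat.fib (m+1) : ℤ) * φ (m+3))
      = 5 * (2 * (Nat.fib (m+2) : ℤ) * φ (m+2) - (Nat.fib (m+3) : ℤ) * φ (m+1)) := by
    rw [e3] at h3
    rw [e2] at h3 h2 ⊢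
    rw [e1] at h3 h2 h1 ⊢
    linear_combination ((Nat.fib (m+1):ℤ)) * h3
      - (2*((Nat.fib (m+1):ℤ) + Nat.fib m)) * h2
      + ((Nat.fib (m+1):ℤ) + Nat.fib m + Nat.fib (m+1)) * h1
  linarith [H]
end

section
/- Every rational sequence (φ_n) satisfying φ_{n+2} = (2 F_{n+1} φ_{n+1} - F_{n+2} φ_n)/F_n for n ≥ 1 with integer initial values φ_1, φ_2 takes only integer values. -/
/-- Every rational sequence satisfying `F n * φ (n+2) = 2 F (n+1) φ (n+1) - F (n+2) φ n`
with integer initial values `φ 1, φ 2` takes only integer values. -/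
theorem stmt9 (φ : ℕ → ℚ)
    (hrec : ∀ n : ℕ, 1 ≤ n →
      (Nat.fib n : ℚ) * φ (n + 2)
        = 2 * (Nat.fib (n + 1) : ℚ) * φ (n + 1) - (Nat.fib (n + 2) : ℚ) * φ n)
    (h1 : ∃ z : ℤ, φ 1 = z) (h2 : ∃ z : ℤ, φ 2 = z) :
    ∀ n : ℕ, 1 ≤ n → ∃ z : ℤ, φ n = z := by
  obtain ⟨a, ha⟩ := h1
  obtain ⟨b, hb⟩ := h2
  have key : ∀ n : ℕ, 1 ≤ n → ∃ x y : ℤ, φ n = x ∧ φ (n + 1) = y ∧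
      (Nat.fib n : ℤ) ∣ (2 * y - x) ∧ (Nat.fib (n + 1) : ℤ) ∣ (2 * x + y) := by
    intro n hn
    induction n with
    | zero => omega
    | succ m ih =>
      rcases Nat.lt_or_ge m 1 with hm | hm
      · -- m = 0, base case n = 1
        interval_cases m
        exact ⟨a, b, ha, hb, ⟨2 * b - a, by simp⟩, ⟨2 * a + b, by simp⟩⟩
      · obtain ⟨x, y, hx, hy, ⟨k, hk⟩, ⟨j, hj⟩⟩ := ih hm
        refine ⟨y, Nat.fib (m + 1) * k - x, hy, ?_, ?_, ?_⟩
        · -- φ (m + 2) = fib (m+1) * k - x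
          have hrec' := hrec m hm
          have hfibQ : (Nat.fib (m + 2) : ℚ) = Nat.fib m + Nat.fib (m + 1) := by
            rw [Nat.fib_add_two]; push_cast; ring
          have hkQ : 2 * (y : ℚ) - x = (Nat.fib m : ℚ) * k := by
            exact_mod_cast congrArg (fun z : ℤ => (z : ℚ)) hk
          have hne : (Nat.fib m : ℚ) ≠ 0 := by
            have := Nat.fib_pos.mpr hm
            positivity
          have : (Nat.fib m : ℚ) * φ (m + 2)
              = (Nat.fib m : ℚ) * ((Nat.fib (m + 1) : ℚ) * k - x) := by
            rw [hrec', hx, hy, hfibQ]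
            nlinarith [hkQ]
          have := mul_left_cancel₀ hne this
          rw [this]; push_cast; ring
        · -- fib (m+1) ∣ 2 * (fib (m+1) * k - x) - y
          exact ⟨2 * k - j, by linarith [hj]⟩
        · -- fib (m+2) ∣ 2 * y + (fib (m+1) * k - x)
          refine ⟨k, ?_⟩
          have : (Nat.fib (m + 2) : ℤ) = Nat.fib m + Nat.fib (m + 1) := by
            rw [Nat.fib_add_two]; push_cast; ring
          rw [this]; linarith [hk]
  intro n hn
  obtain ⟨x, y, hx, _⟩ := key n hn
  exact ⟨x, hx⟩
end

section
/- For all n ≥ 1, the triple (2, P_{2n-1}, P_{2n+1}) of Pell numbers satisfies the Markov equation: 4 + P_{2n-1}² + P_{2n+1}² = 6 P_{2n-1} P_{2n+1}. -/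
/-- The Pell numbers: `P 0 = 0`, `P 1 = 1`, `P (n+2) = 2 P (n+1) + P n`. -/
def pell : ℕ → ℤ
  | 0 => 0
  | 1 => 1
  | (n + 2) => 2 * pell (n + 1) + pell n

lemma pell_step (k : ℕ) : pell (k + 4) = 6 * pell (k + 2) - pell k := by
  show pell (k + 2 + 2) = _
  rw [pell, pell, pell]; ring

/-- For all `n ≥ 1`, the triple `(2, P (2n-1), P (2n+1))` of Pell numbers satisfies
the Markov equation: `4 + P (2n-1)² + P (2n+1)² = 6 P (2n-1) P (2n+1)`. -/
theorem stmt16 : ∀ n : ℕ, 1 ≤ n →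
    4 + pell (2 * n - 1) ^ 2 + pell (2 * n + 1) ^ 2
      = 6 * pell (2 * n - 1) * pell (2 * n + 1) := by
  intro n hn
  induction n with
  | zero => omega
  | succ m ih =>
    rcases Nat.eq_or_lt_of_le hn with h | h
    · simp [← h]; decide
    · have hm : 1 ≤ m := by omega
      have ih' := ih hm
      have e1 : 2 * (m + 1) - 1 = 2 * m - 1 + 2 := by omega
      have e2 : 2 * (m + 1) + 1 = 2 * m - 1 + 4 := by omega
      have e3 : 2 * m + 1 = 2 * m - 1 + 2 := by omega
      rw [e1, e2, pell_step]
      rw [e3] at ih'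
      nlinarith [ih']
end
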